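/- Let α ∈ Mₙ(S) be a matrix for which there exists γ ∈ Mₙ(S) with α·γ = γ·α = u^d·Iₙ. Let c be an integer with c > 2d and let X ∈ u^c·Mₙ(S). Then there exists Y ∈ Mₙ(S) such that X = Y·α − α·σ(Y). (Hence the σ-conjugacy class of α + X, under conjugation by matrices of the form Iₙ + Y, coincides with that of α; this is the key 'successive approximation' claim in the proof that deformation functors of bounded height have finite tangent space.) -/

import Mathlib

open PowerSeries

namespace Stmt0Aux

variable {F : Type*} [Field F] {n : ℕ}

/-- Divisibility by `u^m` expressed coefficientwise. -/
def D (m : ℕ) (A : Matrix (Fin n) (Fin n) (PowerSeries F)) : Prop :=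
  ∀ i j, ∀ l < m, PowerSeries.coeff l (A i j) = 0

lemma D.mono {m m' : ℕ} (h : m' ≤ m) {A : Matrix (Fin n) (Fin n) (PowerSeries F)}
    (hA : D m A) : D m' A :=
  fun i j l hl => hA i j l (lt_of_lt_of_le hl h)

lemma D.mul_right {m : ℕ} {A : Matrix (Fin n) (Fin n) (PowerSeries F)} (hA : D m A)
    (B : Matrix (Fin n) (Fin n) (PowerSeries F)) : D m (A * B) := by
  intro i j l hl
  rw [Matrix.mul_apply, map_sum]
  refine Finset.sum_eq_zero fun k _ => ?_
  rw [PowerSeries.coeff_mul]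
  refine Finset.sum_eq_zero fun ab hab => ?_
  rw [Finset.HasAntidiagonal.mem_antidiagonal] at hab
  rw [hA i k ab.1 (lt_of_le_of_lt (Nat.le.intro hab) hl), zero_mul]

lemma D.mul_left {m : ℕ} {A : Matrix (Fin n) (Fin n) (PowerSeries F)} (hA : D m A)
    (B : Matrix (Fin n) (Fin n) (PowerSeries F)) : D m (B * A) := by
  intro i j l hl
  rw [Matrix.mul_apply, map_sum]
  refine Finset.sum_eq_zero fun k _ => ?_
  rw [PowerSeries.coeff_mul]
  refine Finset.sum_eq_zero fun ab hab => ?_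
  rw [Finset.HasAntidiagonal.mem_antidiagonal] at hab
  rw [hA k j ab.2 (lt_of_le_of_lt (Nat.le.intro ((add_comm ab.1 ab.2) ▸ hab)) hl), mul_zero]

lemma D.sub {m : ℕ} {A B : Matrix (Fin n) (Fin n) (PowerSeries F)} (hA : D m A) (hB : D m B) :
    D m (A - B) := by
  intro i j l hl
  have : (A - B) i j = A i j - B i j := rfl
  rw [this, map_sub, hA i j l hl, hB i j l hl, sub_zero]

/-- Entrywise division by `X ^ d`. -/
noncomputable def Qm (d : ℕ) (A : Matrix (Fin n) (Fin n) (PowerSeries F)) :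
    Matrix (Fin n) (Fin n) (PowerSeries F) :=
  A.map fun f => PowerSeries.mk fun m => PowerSeries.coeff (m + d) f

lemma Qm_spec {d : ℕ} {A : Matrix (Fin n) (Fin n) (PowerSeries F)} (hA : D d A) :
    (PowerSeries.X ^ d : PowerSeries F) • Qm d A = A := by
  ext i j m
  have h1 : ((PowerSeries.X ^ d : PowerSeries F) • Qm d A) i j
      = PowerSeries.X ^ d * (PowerSeries.mk fun k => PowerSeries.coeff (k + d) (A i j)) := rfl
  rw [h1, PowerSeries.coeff_X_pow_mul']
  split_ifs with h
  · rw [PowerSeries.coeff_mk, Nat.sub_add_cancel h]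
  · exact (hA i j m (not_le.mp h)).symm

lemma D.qm {m d : ℕ} {A : Matrix (Fin n) (Fin n) (PowerSeries F)} (hA : D m A) :
    D (m - d) (Qm d A) := by
  intro i j l hl
  have h1 : Qm d A i j = PowerSeries.mk fun m => PowerSeries.coeff (m + d) (A i j) := rfl
  rw [h1, PowerSeries.coeff_mk]
  exact hA i j (l + d) (by omega)

lemma D.mapσ {p : ℕ} (hp : p.Prime) {σ : PowerSeries F →+* PowerSeries F}
    (hσ : ∀ (f : PowerSeries F) (k : ℕ), PowerSeries.coeff k (σ f) =
      if p ∣ k then (PowerSeries.coeff (k / p) f) ^ p else 0)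
    {m : ℕ} {A : Matrix (Fin n) (Fin n) (PowerSeries F)} (hA : D m A) :
    D (2 * m) (A.map σ) := by
  intro i j l hl
  have h1 : (A.map σ) i j = σ (A i j) := rfl
  rw [h1, hσ]
  split_ifs with h
  · have hlt : l / p < m := by
      rcases h with ⟨t, rfl⟩
      have hp2 : 2 ≤ p := hp.two_le
      rw [Nat.mul_div_cancel_left _ hp.pos]
      nlinarith
    rw [hA i j _ hlt, zero_pow hp.ne_zero]
  · rfl

lemma smul_cancel {d : ℕ} {A B : Matrix (Fin n) (Fin n) (PowerSeries F)}
    (h : (PowerSeries.X ^ d : PowerSeries F) • A = (PowerSeries.X ^ d : PowerSeries F) • B) :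
    A = B := by
  apply Matrix.ext; intro i j
  have h1 : ((PowerSeries.X ^ d : PowerSeries F) • A) i j
      = ((PowerSeries.X ^ d : PowerSeries F) • B) i j := by rw [h]
  rw [Matrix.smul_apply, Matrix.smul_apply, smul_eq_mul, smul_eq_mul] at h1
  exact mul_left_cancel₀ (pow_ne_zero d PowerSeries.X_ne_zero) h1

variable (σ : PowerSeries F →+* PowerSeries F) (d : ℕ)
  (α γ X : Matrix (Fin n) (Fin n) (PowerSeries F))

/-- The sequence of error terms in the successive approximation. -/
noncomputable def seq : ℕ → Matrix (Fin n) (Fin n) (PowerSeries F)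
  | 0 => X
  | k + 1 => α * ((Qm d (seq k * γ)).map σ)

end Stmt0Aux

open Stmt0Aux in
/-- Successive approximation: if `α` has an "inverse up to `u^d`", `c > 2d`, and `X` is
divisible by `u^c`, then `X = Y·α − α·σ(Y)` for some `Y`, where `σ` is the Frobenius
endomorphism of `S = F[[u]]` given by `σ(Σ aᵢ uⁱ) = Σ aᵢᵖ u^{ip}`. -/
theorem stmt0 (p : ℕ) (hp : p.Prime) (F : Type*) [Field F] [CharP F p]
    (σ : PowerSeries F →+* PowerSeries F)
    (hσ : ∀ (f : PowerSeries F) (n : ℕ), PowerSeries.coeff n (σ f) =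
      if p ∣ n then (PowerSeries.coeff (n / p) f) ^ p else 0)
    (n d c : ℕ) (hn : 1 ≤ n) (hd : 1 ≤ d) (hc : 2 * d < c)
    (α γ X : Matrix (Fin n) (Fin n) (PowerSeries F))
    (hαγ : α * γ = (PowerSeries.X ^ d : PowerSeries F) • (1 : Matrix (Fin n) (Fin n) (PowerSeries F)))
    (hγα : γ * α = (PowerSeries.X ^ d : PowerSeries F) • (1 : Matrix (Fin n) (Fin n) (PowerSeries F)))
    (hX : ∃ Z : Matrix (Fin n) (Fin n) (PowerSeries F),
      X = (PowerSeries.X ^ c : PowerSeries F) • Z) :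
    ∃ Y : Matrix (Fin n) (Fin n) (PowerSeries F),
      X = Y * α - α * (Y.map σ) := by
  classical
  -- the sequence of error terms and approximants
  set E : ℕ → Matrix (Fin n) (Fin n) (PowerSeries F) := seq σ d α γ X with hE
  have hseq0 : E 0 = X := rfl
  have hseqS : ∀ k, E (k + 1) = α * ((Qm d (E k * γ)).map σ) := fun k => rfl
  set Ys : ℕ → Matrix (Fin n) (Fin n) (PowerSeries F) := fun k => Qm d (E k * γ) with hYs
  -- invariant: E k is divisible by u^(c+k)
  have hDX : D c X := by
    obtain ⟨Z, hZ⟩ := hX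
    intro i j l hl
    have h1 : X i j = PowerSeries.X ^ c * Z i j := by rw [hZ]; rfl
    rw [h1, PowerSeries.coeff_X_pow_mul', if_neg (not_le.mpr hl)]
  have hDE : ∀ k, D (c + k) (E k) := by
    intro k
    induction k with
    | zero => exact hDX
    | succ k ih =>
      rw [hseqS]
      have h1 : D (c + k) (E k * γ) := ih.mul_right γ
      have h2 : D (c + k - d) (Qm d (E k * γ)) := h1.qm
      have h3 : D (2 * (c + k - d)) ((Qm d (E k * γ)).map σ) := h2.mapσ hp hσ
      exact ((h3.mono (by omega)).mul_left α)
  -- Ys k is divisible by u^(k+1)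
  have hDY : ∀ k, D (k + 1) (Ys k) := by
    intro k
    have h1 : D (c + k - d) (Ys k) := ((hDE k).mul_right γ).qm
    exact h1.mono (by omega)
  -- Ys k * α = E k
  have hYα : ∀ k, Ys k * α = E k := by
    intro k
    apply smul_cancel (d := d)
    have h1 : (PowerSeries.X ^ d : PowerSeries F) • Ys k = E k * γ :=
      Qm_spec (((hDE k).mul_right γ).mono (by omega))
    calc (PowerSeries.X ^ d : PowerSeries F) • (Ys k * α)
        = ((PowerSeries.X ^ d : PowerSeries F) • Ys k) * α := by rw [Matrix.smul_mul]
      _ = E k * γ * α := by rw [h1]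
      _ = E k * ((PowerSeries.X ^ d : PowerSeries F) • 1) := by rw [mul_assoc, hγα]
      _ = (PowerSeries.X ^ d : PowerSeries F) • E k := by rw [Matrix.mul_smul, mul_one]
  -- partial sums
  set S : ℕ → Matrix (Fin n) (Fin n) (PowerSeries F) :=
    fun N => ∑ k ∈ Finset.range N, Ys k with hS
  have hSrec : ∀ N, S N * α - α * ((S N).map σ) = X - E N := by
    intro N
    induction N with
    | zero =>
      simp only [hS, Finset.range_zero, Finset.sum_empty, Matrix.zero_mul,
        Matrix.map_zero σ (map_zero σ), Matrix.mul_zero, sub_zero, hseq0, sub_self]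
    | succ N ih =>
      have h1 : S (N + 1) = S N + Ys N := Finset.sum_range_succ _ _
      rw [h1, Matrix.map_add σ (map_add σ), add_mul, mul_add, hYα N]
      have h2 : α * ((Ys N).map σ) = E (N + 1) := (hseqS N).symm
      rw [h2]
      rw [show S N * α + E N - (α * (S N).map σ + E (N + 1))
        = (S N * α - α * (S N).map σ) + (E N - E (N + 1)) from by abel, ih]
      abel
  -- the limit
  set Y : Matrix (Fin n) (Fin n) (PowerSeries F) :=
    Matrix.of fun i j => PowerSeries.mk fun m => PowerSeries.coeff m (S (m + 1) i j) with hY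
  -- stability of coefficients of partial sums
  have hstab : ∀ m N, m < N → ∀ i j,
      PowerSeries.coeff m (S N i j) = PowerSeries.coeff m (S (m + 1) i j) := by
    intro m N hmN i j
    have h1 : ∀ N', PowerSeries.coeff m (S N' i j)
        = ∑ k ∈ Finset.range N', PowerSeries.coeff m (Ys k i j) := by
      intro N'
      show PowerSeries.coeff m ((∑ k ∈ Finset.range N', Ys k) i j) = _
      rw [Matrix.sum_apply, map_sum]
    rw [h1, h1]
    refine (Finset.sum_subset (Finset.range_subset_range.2 hmN) ?_).symm
    intro k _ hk
    rw [Finset.mem_range, not_lt] at hk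
    exact hDY k i j m (by omega)
  -- Y - S N is divisible by u^N
  have hYS : ∀ N, D N (Y - S N) := by
    intro N i j l hl
    have h1 : (Y - S N) i j = Y i j - S N i j := rfl
    rw [h1, map_sub]
    have h2 : Y i j = PowerSeries.mk fun m => PowerSeries.coeff m (S (m + 1) i j) := rfl
    rw [h2, PowerSeries.coeff_mk]
    rw [hstab l N hl i j, sub_self]
  -- the total error is divisible by u^N for all N
  have hkey : ∀ N, D N (Y * α - α * (Y.map σ) - X) := by
    intro N
    have hrw : Y * α - α * (Y.map σ) - X
        = ((Y - S N) * α - α * ((Y - S N).map σ)) - E N := by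
      rw [Matrix.map_sub σ (map_sub σ), sub_mul, Matrix.mul_sub]
      have h := hSrec N
      rw [show Y * α - S N * α - (α * Y.map σ - α * (S N).map σ) - E N
        = Y * α - α * Y.map σ - ((S N * α - α * (S N).map σ) + E N) from by abel, h]
      abel
    rw [hrw]
    have h1 : D N ((Y - S N) * α) := (hYS N).mul_right α
    have h2 : D N (α * ((Y - S N).map σ)) :=
      ((((hYS N).mapσ hp hσ)).mono (by omega)).mul_left α
    have h3 : D N (E N) := (hDE N).mono (by omega)
    exact (h1.sub h2).sub h3
  refine ⟨Y, ?_⟩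
  have : Y * α - α * (Y.map σ) - X = 0 := by
    apply Matrix.ext; intro i j
    apply PowerSeries.ext; intro m
    have := hkey (m + 1) i j m (Nat.lt_succ_self m)
    simpa using this
  have h := sub_eq_zero.mp this
  exact h.symm
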